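/- In the linear best-response game B_i(b_{-i}) = f_i·(Σ_{j≠i} b_j + β) with β > 0 and all f_i > 0, if Σ_i f_i/(f_i+1) ≥ 1 then no finite nonnegative Nash equilibrium exists. -/

import Mathlib

/-- In the linear best-response game with all f_i > 0 and β > 0, if
Σ_i f_i/(f_i+1) ≥ 1 then no finite nonnegative Nash equilibrium (fixed point of the joint
best-response map) exists. -/
theorem linear_bid_game_no_NE
    (I : ℕ) (f : Fin I → ℝ) (β : ℝ)
    (hf : ∀ i, 0 < f i) (hβ : 0 < β)
    (hsum : 1 ≤ ∑ i, f i / (f i + 1)) :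
    ¬ ∃ b : Fin I → ℝ, (∀ i, 0 ≤ b i) ∧
        ∀ i, b i = f i * ((∑ j ∈ Finset.univ.erase i, b j) + β) := by
  rintro ⟨b, hb, heq⟩
  set S := ∑ j, b j with hS
  have hSpos : 0 < S + β := by
    have : 0 ≤ S := Finset.sum_nonneg fun i _ => hb i
    linarith
  have key : ∀ i, b i = f i / (f i + 1) * (S + β) := by
    intro i
    have herase : ∑ j ∈ Finset.univ.erase i, b j = S - b i := by
      rw [hS, ← Finset.sum_erase_add _ _ (Finset.mem_univ i)]; ring
    have h := heq i
    rw [herase] at h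
    have hfi := hf i
    field_simp
    nlinarith [h]
  have hSS : S = (∑ i, f i / (f i + 1)) * (S + β) := by
    rw [hS, Finset.sum_mul]
    exact Finset.sum_congr rfl fun i _ => key i
  nlinarith [hSS, mul_le_mul_of_nonneg_right hsum hSpos.le]
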